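/- Fix p > 2, s > 0, L > 0, r > 0, μ = 0. Consider the composite gradient method iteration defined implicitly by L·r_{k+1} + s·r_{k+1}^{p−1} = L·r_k + s·r^{p−1} with r_0 = 0 (one-dimensional reduction with μ = 0). Then for each k ≥ 0, if 0 ≤ r_k ≤ r, we have 0 ≤ r_{k+1} ≤ r and r − r_{k+1} ≥ (r − r_k)·L/(L + s(p−1)r^{p−2}). -/

import Mathlib

/-- One step of the one-dimensional reduction of the composite gradient method (with `μ = 0`):
if `0 ≤ r_k ≤ r` and `r_{k+1} ≥ 0` satisfies `L·r_{k+1} + s·r_{k+1}^{p−1} = L·r_k + s·r^{p−1}`,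
then `r_{k+1} ≤ r` and the gap contracts by at most the factor `L/(L + s(p−1)r^{p−2})`. -/
theorem stmt14 (p s L r rk rk1 : ℝ) (hp : 2 < p) (hs : 0 < s) (hL : 0 < L) (hr : 0 < r)
    (hrk0 : 0 ≤ rk) (hrkr : rk ≤ r) (hrk10 : 0 ≤ rk1)
    (heq : L * rk1 + s * rk1 ^ (p - 1) = L * rk + s * r ^ (p - 1)) :
    rk1 ≤ r ∧ r - rk1 ≥ (r - rk) * L / (L + s * (p - 1) * r ^ (p - 2)) := by
  have hq : (1:ℝ) ≤ p - 1 := by linarith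
  have h1 : rk1 ≤ r := by
    by_contra h
    push_neg at h
    have hpow : r ^ (p - 1) < rk1 ^ (p - 1) :=
      Real.rpow_lt_rpow hr.le h (by linarith)
    nlinarith
  refine ⟨h1, ?_⟩
  have hA : (0:ℝ) < r ^ (p - 2) := Real.rpow_pos_of_pos hr _
  have hB : (0:ℝ) < r ^ (p - 1) := Real.rpow_pos_of_pos hr _
  -- Bernoulli inequality
  have hb := one_add_mul_self_le_rpow_one_add (by
    have : 0 ≤ rk1 / r := div_nonneg hrk10 hr.le
    linarith : -1 ≤ rk1 / r - 1) hq
  have h2 : 1 + (rk1 / r - 1) = rk1 / r := by ring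
  rw [h2, Real.div_rpow hrk10 hr.le] at hb
  -- multiply by r^(p-1)
  have hb2 : (1 + (p - 1) * (rk1 / r - 1)) * r ^ (p - 1) ≤ rk1 ^ (p - 1) := by
    have := mul_le_mul_of_nonneg_right hb hB.le
    rwa [div_mul_cancel₀ _ hB.ne'] at this
  have hsplit : r ^ (p - 1) = r * r ^ (p - 2) := by
    rw [← Real.rpow_one_add' hr.le (by norm_num; linarith)]
    ring_nf
  -- key convexity inequality
  have hkey : r ^ (p - 1) - rk1 ^ (p - 1) ≤ (p - 1) * r ^ (p - 2) * (r - rk1) := by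
    have : (1 + (p - 1) * (rk1 / r - 1)) * r ^ (p - 1)
        = r ^ (p - 1) + (p - 1) * (rk1 - r) * r ^ (p - 2) := by
      rw [hsplit]
      field_simp
    rw [this] at hb2
    nlinarith
  have hD : 0 < L + s * (p - 1) * r ^ (p - 2) := by positivity
  rw [ge_iff_le, div_le_iff₀ hD]
  nlinarith [mul_le_mul_of_nonneg_left hkey hs.le]
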